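/- arXiv:1411.1021 — 3 statements merged into one kernel-verified Lean document; each statement's English description precedes it below -/
import Mathlib

section
/- For every instance (G,w) of the concurrent graph sharing game, the first player can guarantee to take vertices of total weight at least 1/3; that is, v(G,w) ≥ 1/3. -/
/-!
Formalization of the concurrent graph sharing game.

An instance is a finite connected simple graph `G` on a finite vertex type `V`
together with vertex weights `w : V → (0,1]` summing to `1`, such that no two
distinct subsets of vertices have the same total weight.

A game history is recorded as a list of the taken vertices, **most recent
first**.  The player-to-move at a history is determined by the history itself:
the first player (1st) moves when his collected weight so far is at most that
of the second player (2nd); by the distinct-subset-sums assumption a tie occurs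
only at the empty history, where indeed 1st begins.  `scores w h` computes the
pair `(w(F), w(S))` of total weights collected by 1st and 2nd along a history.

A strategy is a function from histories to the chosen next vertex; it is legal
if, whenever some legal move exists (a non-taken vertex that is adjacent to a
taken one, or any vertex at the very beginning), it produces a legal move.
`firstScore w σ τ` is the total weight collected by 1st after the complete play
(all `Fintype.card V` vertices taken) in which 1st uses `σ` and 2nd uses `τ`.

`FirstGuarantees G w c` says that 1st has a legal strategy guaranteeing that he
collects total weight at least `c` against every legal strategy of 2nd, and the
value `gameValue G w` is the supremum of all such guarantees `c`.
-/

namespace ConcurrentSharing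

variable {V : Type} [Fintype V]

/-- The pair `(w(F), w(S))` of weights collected by the two players along a
history (most recent vertex first): each vertex is assigned to the player who
was to move, namely 1st iff his score so far is at most 2nd's score. -/
noncomputable def scores (w : V → ℝ) : List V → ℝ × ℝ
  | [] => (0, 0)
  | v :: h =>
    let p := scores w h
    if p.1 ≤ p.2 then (p.1 + w v, p.2) else (p.1, p.2 + w v)

/-- `v` is a legal next move at history `h`: it is not yet taken, and it is
adjacent to some taken vertex (any vertex is legal at the start). -/
def LegalMove (G : SimpleGraph V) (h : List V) (v : V) : Prop :=
  v ∉ h ∧ (h = [] ∨ ∃ u ∈ h, G.Adj u v)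

/-- A strategy (for either player) maps histories to vertices; it is legal if
it produces a legal move whenever a legal move exists. -/
def LegalStrategy (G : SimpleGraph V) (σ : List V → V) : Prop :=
  ∀ h : List V, (∃ v, LegalMove G h v) → LegalMove G h (σ h)

/-- The history after `n` rounds when 1st plays `σ` and 2nd plays `τ`
(the player to move is the one whose collected weight so far is smaller;
at the start, i.e. on a tie, 1st moves). -/
noncomputable def playAux (w : V → ℝ) (σ τ : List V → V) : ℕ → List V
  | 0 => []
  | n + 1 =>
    let h := playAux w σ τ n
    (if (scores w h).1 ≤ (scores w h).2 then σ h else τ h) :: h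

/-- The total weight `w(F)` collected by 1st at the end of the complete play
(all vertices taken) in which 1st plays `σ` and 2nd plays `τ`. -/
noncomputable def firstScore (w : V → ℝ) (σ τ : List V → V) : ℝ :=
  (scores w (playAux w σ τ (Fintype.card V))).1

/-- 1st has a legal strategy collecting total weight at least `c` against
every legal strategy of 2nd. -/
def FirstGuarantees (G : SimpleGraph V) (w : V → ℝ) (c : ℝ) : Prop :=
  ∃ σ : List V → V, LegalStrategy G σ ∧
    ∀ τ : List V → V, LegalStrategy G τ → c ≤ firstScore w σ τ

/-- The value `v(G,w)`: the maximum total weight 1st can guarantee. -/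
noncomputable def gameValue (G : SimpleGraph V) (w : V → ℝ) : ℝ :=
  sSup {c : ℝ | FirstGuarantees G w c}

/-- `(G, w)` is an instance of the concurrent graph sharing game: `G` is
connected, the weights lie in `(0,1]` and sum to `1`, and no two distinct
subsets of vertices have the same total weight. -/
def IsGameInstance (G : SimpleGraph V) (w : V → ℝ) : Prop :=
  G.Connected ∧ (∀ v : V, 0 < w v ∧ w v ≤ 1) ∧ (∑ v : V, w v) = 1 ∧
    ∀ A B : Finset V, A ≠ B → ∑ a ∈ A, w a ≠ ∑ b ∈ B, w b

end ConcurrentSharing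

section Aux

namespace ConcurrentSharing

variable {V : Type} [Fintype V]

lemma scores_cons (w : V → ℝ) (v : V) (h : List V) :
    scores w (v :: h) =
      if (scores w h).1 ≤ (scores w h).2 then ((scores w h).1 + w v, (scores w h).2)
      else ((scores w h).1, (scores w h).2 + w v) := rfl

lemma scores_nonneg (w : V → ℝ) (hw : ∀ v, 0 ≤ w v) (h : List V) :
    0 ≤ (scores w h).1 ∧ 0 ≤ (scores w h).2 := by
  induction h with
  | nil => simp [scores]
  | cons v h ih =>
    rw [scores_cons]
    have := hw v
    split <;> constructor <;> simp <;> linarith [ih.1, ih.2]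

lemma scores_sum (w : V → ℝ) (h : List V) :
    (scores w h).1 + (scores w h).2 = (h.map w).sum := by
  induction h with
  | nil => simp [scores]
  | cons v h ih =>
    rw [scores_cons]
    split <;> simp only [List.map_cons, List.sum_cons] <;> linarith

lemma scores_fst_le_cons (w : V → ℝ) (hw : ∀ v, 0 ≤ w v) (v : V) (h : List V) :
    (scores w h).1 ≤ (scores w (v :: h)).1 := by
  rw [scores_cons]
  have := hw v
  split <;> simp <;> linarith

lemma exists_adj_of_walk {G : SimpleGraph V} {u x : V} (p : G.Walk u x)
    (h : List V) (hu : u ∈ h) (hx : x ∉ h) :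
    ∃ a ∈ h, ∃ b, b ∉ h ∧ G.Adj a b := by
  induction p with
  | nil => exact absurd hu hx
  | @cons u b x hadj p ih =>
    by_cases hb : b ∈ h
    · exact ih hb hx
    · exact ⟨u, hu, b, hb, hadj⟩

lemma exists_legalMove {G : SimpleGraph V} (hG : G.Connected)
    {h : List V} (hnd : h.Nodup) (hlen : h.length < Fintype.card V) :
    ∃ v, LegalMove G h v := by
  classical
  have hx : ∃ x : V, x ∉ h := by
    by_contra hc
    push_neg at hc
    have h1 : (Finset.univ : Finset V) ⊆ h.toFinset := fun x _ => List.mem_toFinset.2 (hc x)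
    have h2 := Finset.card_le_card h1
    rw [List.toFinset_card_of_nodup hnd] at h2
    simp only [Finset.card_univ] at h2
    omega
  obtain ⟨x, hxh⟩ := hx
  match h, hnd with
  | [], _ => exact ⟨x, by simp, Or.inl rfl⟩
  | u :: t, hnd =>
    obtain ⟨a, ha, b, hb, hab⟩ :=
      (hG.preconnected u x).elim fun p => exists_adj_of_walk p (u :: t) (by simp) hxh
    exact ⟨b, hb, Or.inr ⟨a, ha, hab⟩⟩

lemma playAux_succ (w : V → ℝ) (σ τ : List V → V) (n : ℕ) :
    playAux w σ τ (n + 1) =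
      (if (scores w (playAux w σ τ n)).1 ≤ (scores w (playAux w σ τ n)).2
        then σ (playAux w σ τ n) else τ (playAux w σ τ n)) :: playAux w σ τ n := rfl

lemma playAux_spec {G : SimpleGraph V} (hG : G.Connected) (w : V → ℝ)
    {σ τ : List V → V} (hσ : LegalStrategy G σ) (hτ : LegalStrategy G τ) :
    ∀ n, n ≤ Fintype.card V →
      (playAux w σ τ n).length = n ∧ (playAux w σ τ n).Nodup := by
  intro n
  induction n with
  | zero => intro _; simp [playAux]
  | succ n ih =>
    intro hn
    obtain ⟨hlen, hnd⟩ := ih (by omega)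
    have hex : ∃ v, LegalMove G (playAux w σ τ n) v :=
      exists_legalMove hG hnd (by omega)
    have hmove : LegalMove G (playAux w σ τ n)
        (if (scores w (playAux w σ τ n)).1 ≤ (scores w (playAux w σ τ n)).2
          then σ (playAux w σ τ n) else τ (playAux w σ τ n)) := by
      split
      · exact hσ _ hex
      · exact hτ _ hex
    rw [playAux_succ]
    exact ⟨by simp [hlen], List.nodup_cons.2 ⟨hmove.1, hnd⟩⟩

lemma playAux_total {G : SimpleGraph V} (hG : G.Connected) (w : V → ℝ)
    {σ τ : List V → V} (hσ : LegalStrategy G σ) (hτ : LegalStrategy G τ) :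
    (scores w (playAux w σ τ (Fintype.card V))).1 +
      (scores w (playAux w σ τ (Fintype.card V))).2 = ∑ v : V, w v := by
  classical
  obtain ⟨hlen, hnd⟩ := playAux_spec hG w hσ hτ (Fintype.card V) le_rfl
  set L := playAux w σ τ (Fintype.card V)
  have huniv : L.toFinset = Finset.univ := by
    apply Finset.eq_univ_of_card
    rw [List.toFinset_card_of_nodup hnd, hlen]
  rw [scores_sum, ← List.sum_toFinset _ hnd, huniv]

/-- The second player's score never exceeds the first player's plus the max weight. -/
lemma snd_le_fst_add_max (w : V → ℝ) (σ τ : List V → V) (m : ℝ)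
    (hm : ∀ v, w v ≤ m) (hm0 : 0 ≤ m) (hw : ∀ v, 0 ≤ w v) :
    ∀ n, (scores w (playAux w σ τ n)).2 ≤ (scores w (playAux w σ τ n)).1 + m := by
  intro n
  induction n with
  | zero => simpa [playAux, scores] using hm0
  | succ n ih =>
    rw [playAux_succ, scores_cons]
    split
    · simp only
      have := hw (σ (playAux w σ τ n))
      linarith
    · simp only
      rename_i hlt
      push_neg at hlt
      have := hm (τ (playAux w σ τ n))
      linarith

end ConcurrentSharing

end Aux

open ConcurrentSharing in
/-- For every instance `(G,w)` of the concurrent graph sharing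
game, the first player can guarantee to take vertices of total weight at least
`1/3`; that is, `v(G,w) ≥ 1/3`. -/
theorem first_player_guarantees_one_third {V : Type} [Fintype V]
    (G : SimpleGraph V) (w : V → ℝ) (hGw : IsGameInstance G w) :
    FirstGuarantees G w (1 / 3) ∧ 1 / 3 ≤ gameValue G w := by
  classical
  obtain ⟨hG, hw01, hsum, -⟩ := hGw
  have hw : ∀ v, 0 ≤ w v := fun v => (hw01 v).1.le
  have hne : Nonempty V := by
    by_contra hc
    rw [not_nonempty_iff] at hc
    rw [Finset.univ_eq_empty, Finset.sum_empty] at hsum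
    norm_num at hsum
  have hcard : 1 ≤ Fintype.card V := Fintype.card_pos
  obtain ⟨vm, -, hvm⟩ := Finset.exists_max_image (Finset.univ : Finset V) w ⟨Classical.arbitrary V, Finset.mem_univ _⟩
  have hvm' : ∀ v, w v ≤ w vm := fun v => hvm v (Finset.mem_univ v)
  -- the first player's strategy: take a max-weight vertex first, then anything legal
  set σ : List V → V := fun h =>
    if h = [] then vm
    else if hex : ∃ v, LegalMove G h v then hex.choose else vm with hσdef
  have hσ : LegalStrategy G σ := by
    intro h hex
    by_cases hnil : h = []
    · subst hnil
      simp only [hσdef, if_pos rfl]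
      exact ⟨List.not_mem_nil, Or.inl rfl⟩
    · simp only [hσdef, if_neg hnil, dif_pos hex]
      exact hex.choose_spec
  -- a default legal strategy for the second player
  set τ₀ : List V → V := fun h =>
    if hex : ∃ v, LegalMove G h v then hex.choose else vm with hτ₀def
  have hτ₀ : LegalStrategy G τ₀ := by
    intro h hex
    simp only [hτ₀def, dif_pos hex]
    exact hex.choose_spec
  have key : ∀ τ : List V → V, LegalStrategy G τ → 1 / 3 ≤ firstScore w σ τ := by
    intro τ hτ
    have htotal := playAux_total hG w hσ hτ
    rw [hsum] at htotal
    have hS0 := (scores_nonneg w hw (playAux w σ τ (Fintype.card V))).2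
    by_cases hA : 1 / 3 ≤ w vm
    · -- the first move takes a vertex of weight ≥ 1/3
      have hmono : Monotone fun n => (scores w (playAux w σ τ n)).1 := by
        apply monotone_nat_of_le_succ
        intro n
        rw [playAux_succ]
        exact scores_fst_le_cons w hw _ _
      have h1 : (scores w (playAux w σ τ 1)).1 = w vm := by
        have : playAux w σ τ 1 = [σ []] := by
          rw [playAux_succ]
          simp [playAux, scores]
        rw [this]
        simp [scores, hσdef]
      have h2 : (scores w (playAux w σ τ 1)).1 ≤
          (scores w (playAux w σ τ (Fintype.card V))).1 := hmono hcard
      rw [h1] at h2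
      calc (1:ℝ) / 3 ≤ w vm := hA
        _ ≤ firstScore w σ τ := h2
    · -- all weights are < 1/3, so 2nd's score never exceeds 1st's by more than 1/3
      push_neg at hA
      have := snd_le_fst_add_max w σ τ (w vm) hvm' (hw vm) hw (Fintype.card V)
      unfold firstScore
      linarith
  have hFG : FirstGuarantees G w (1 / 3) := ⟨σ, hσ, key⟩
  refine ⟨hFG, ?_⟩
  apply le_csSup
  · -- the set of guarantees is bounded above by 1
    refine ⟨1, fun c hc => ?_⟩
    obtain ⟨σ', hσ', hc'⟩ := hc
    have htotal := playAux_total hG w hσ' hτ₀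
    rw [hsum] at htotal
    have hS0 := (scores_nonneg w hw (playAux w σ' τ₀ (Fintype.card V))).2
    have := hc' τ₀ hτ₀
    unfold firstScore at this
    linarith
  · exact hFG
end

section
/- Let T be a finite tree and let f : V(T) → V(T) be a function such that f(a) is adjacent to a for every vertex a of T. Then there exists an edge aa' of T with f(a) = a' and f(a') = a; that is, f has a 2-cycle. -/
/-- Let `T` be a finite tree with at least two vertices and
let `f : V(T) → V(T)` be a function such that `f a` is adjacent to `a` for
every vertex `a` of `T`. Then there exists an edge `a a'` of `T` with
`f a = a'` and `f a' = a`; that is, `f` has a `2`-cycle. -/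
theorem tree_neighbor_map_has_two_cycle {V : Type} [Fintype V]
    (T : SimpleGraph V) (hT : T.IsTree) (hcard : 1 < Fintype.card V)
    (f : V → V) (hf : ∀ a : V, T.Adj a (f a)) :
    ∃ a a' : V, T.Adj a a' ∧ f a = a' ∧ f a' = a := by
  classical
  by_contra h
  push_neg at h
  have hmem : ∀ a : V, s(a, f a) ∈ T.edgeFinset := fun a => by
    rw [SimpleGraph.mem_edgeFinset]
    exact (hf a)
  have hinj : Function.Injective
      (fun a : V => (⟨s(a, f a), hmem a⟩ : T.edgeFinset)) := by
    intro a b hab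
    rw [Subtype.mk_eq_mk, Sym2.eq_iff] at hab
    rcases hab with ⟨h1, _⟩ | ⟨h1, h2⟩
    · exact h1
    · exfalso
      exact h a (f a) (hf a) rfl (by rw [h2]; exact h1.symm)
  have hle := Fintype.card_le_of_injective _ hinj
  rw [Fintype.card_coe] at hle
  have := hT.card_edgeFinset
  omega
end

section
/- The infimum of v(G,w) over all instances (G,w) of the concurrent graph sharing game in which G is a tree equals 1/2. -/
namespace ConcurrentSharing

open Finset

set_option linter.unusedSectionVars false

variable {V : Type} [Fintype V] [DecidableEq V]

/-- Finset version of a legal move. -/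
def FLegal (G : SimpleGraph V) (A : Finset V) (v : V) : Prop :=
  v ∉ A ∧ (A = ∅ ∨ ∃ u ∈ A, G.Adj u v)

lemma fLegal_iff (G : SimpleGraph V) (h : List V) (v : V) :
    FLegal G h.toFinset v ↔ LegalMove G h v := by
  simp [FLegal, LegalMove, List.toFinset_eq_empty_iff]

/-- Fueled "the player to move (the one currently behind by `d ≥ 0`) eventually wins"
predicate. -/
def winM (G : SimpleGraph V) (w : V → ℝ) : ℕ → Finset V → ℝ → Prop
  | 0, _, _ => False
  | (k+1), A, d => ∃ v, FLegal G A v ∧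
      ((d < w v ∧ ¬ winM G w k (insert v A) (w v - d)) ∨
       (w v < d ∧ winM G w k (insert v A) (d - w v)))

lemma scores_eq_sum (w : V → ℝ) :
    ∀ h : List V, h.Nodup → ∃ F S : Finset V, Disjoint F S ∧ F ∪ S = h.toFinset ∧
      (scores w h).1 = ∑ x ∈ F, w x ∧ (scores w h).2 = ∑ x ∈ S, w x := by
  intro h
  induction h with
  | nil =>
    intro _
    exact ⟨∅, ∅, by simp, by simp, by simp [scores], by simp [scores]⟩
  | cons v t ih =>
    intro hnd
    obtain ⟨hv, hnd'⟩ := List.nodup_cons.mp hnd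
    obtain ⟨F, S, hdis, hun, h1, h2⟩ := ih hnd'
    have hvF : v ∉ F := fun hm => hv (List.mem_toFinset.mp (hun ▸ Finset.mem_union_left S hm))
    have hvS : v ∉ S := fun hm => hv (List.mem_toFinset.mp (hun ▸ Finset.mem_union_right F hm))
    by_cases hc : (scores w t).1 ≤ (scores w t).2
    · have hsc : scores w (v :: t) = ((scores w t).1 + w v, (scores w t).2) := by
        simp [scores, hc]
      refine ⟨insert v F, S, ?_, ?_, ?_, ?_⟩
      · exact Finset.disjoint_insert_left.mpr ⟨hvS, hdis⟩
      · rw [Finset.insert_union, hun, List.toFinset_cons]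
      · rw [hsc, Finset.sum_insert hvF, h1]; ring
      · rw [hsc]; exact h2
    · have hsc : scores w (v :: t) = ((scores w t).1, (scores w t).2 + w v) := by
        simp [scores, hc]
      refine ⟨F, insert v S, ?_, ?_, ?_, ?_⟩
      · exact Finset.disjoint_insert_right.mpr ⟨hvF, hdis⟩
      · rw [Finset.union_insert, hun, List.toFinset_cons]
      · rw [hsc]; exact h1
      · rw [hsc, Finset.sum_insert hvS, h2]; ring

lemma walk_boundary {G : SimpleGraph V} {S : Finset V} {a b : V} (p : G.Walk a b) :
    a ∈ S → b ∉ S → ∃ u ∈ S, ∃ x, x ∉ S ∧ G.Adj u x := by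
  induction p with
  | nil => intro ha hb; exact absurd ha hb
  | @cons u c b hadj q ih =>
    intro ha hb
    by_cases hc : c ∈ S
    · exact ih hc hb
    · exact ⟨u, ha, c, hc, hadj⟩

lemma exists_legalMove_s8 {G : SimpleGraph V} (hc : G.Connected) {h : List V}
    (hne : h.toFinset ≠ Finset.univ) : ∃ v, LegalMove G h v := by
  obtain ⟨b, hb⟩ : ∃ b, b ∉ h.toFinset := by
    by_contra hall
    push_neg at hall
    exact hne (Finset.eq_univ_iff_forall.mpr hall)
  cases h with
  | nil => exact ⟨b, by simp [LegalMove]⟩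
  | cons a t =>
    have ha : a ∈ (a :: t).toFinset := by simp
    obtain ⟨u, hu, x, hx, hadj⟩ := walk_boundary ((hc.preconnected a b).some) ha hb
    exact ⟨x, by simpa using hx, Or.inr ⟨u, by simpa using hu, hadj⟩⟩

lemma play_spec {G : SimpleGraph V} (hc : G.Connected) {w : V → ℝ} {σ τ : List V → V}
    (hσ : LegalStrategy G σ) (hτ : LegalStrategy G τ) :
    ∀ n, n ≤ Fintype.card V → (playAux w σ τ n).length = n ∧ (playAux w σ τ n).Nodup := by
  intro n
  induction n with
  | zero => intro _; simp [playAux]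
  | succ n ih =>
    intro hn
    obtain ⟨hlen, hnd⟩ := ih (Nat.le_of_succ_le hn)
    have hne : (playAux w σ τ n).toFinset ≠ Finset.univ := by
      intro heq
      have hcard := List.toFinset_card_of_nodup hnd
      rw [heq, Finset.card_univ, hlen] at hcard
      omega
    have hex := exists_legalMove_s8 hc hne
    have hlegal : LegalMove G (playAux w σ τ n)
        (if (scores w (playAux w σ τ n)).1 ≤ (scores w (playAux w σ τ n)).2
          then σ (playAux w σ τ n) else τ (playAux w σ τ n)) := by
      split
      · exact hσ _ hex
      · exact hτ _ hex
    have hunf : playAux w σ τ (n+1) =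
        (if (scores w (playAux w σ τ n)).1 ≤ (scores w (playAux w σ τ n)).2
          then σ (playAux w σ τ n) else τ (playAux w σ τ n)) :: playAux w σ τ n := by
      simp [playAux]
    rw [hunf]
    exact ⟨by simp [hlen], List.nodup_cons.mpr ⟨hlegal.1, hnd⟩⟩

end ConcurrentSharing

namespace ConcurrentSharing

open Finset

set_option linter.unusedSectionVars false
attribute [local instance] Classical.propDecidable

variable {V : Type} [Fintype V] [DecidableEq V]

noncomputable def anyStrat (G : SimpleGraph V) [Nonempty V] : List V → V := fun h =>
  if hx : ∃ v, LegalMove G h v then hx.choose else Classical.arbitrary V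

lemma anyStrat_legal (G : SimpleGraph V) [Nonempty V] : LegalStrategy G (anyStrat G) := by
  intro h hx
  rw [anyStrat, dif_pos hx]
  exact hx.choose_spec

/-- The progress property 1st's strategy looks for. -/
def good (G : SimpleGraph V) (w : V → ℝ) (h : List V) (v : V) : Prop :=
  ((scores w h).2 - (scores w h).1 < w v ∧
    ¬ winM G w (Fintype.card V - (h.length + 1)) (insert v h.toFinset)
      (w v - ((scores w h).2 - (scores w h).1))) ∨
  (w v < (scores w h).2 - (scores w h).1 ∧
    winM G w (Fintype.card V - (h.length + 1)) (insert v h.toFinset)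
      (((scores w h).2 - (scores w h).1) - w v))

noncomputable def firstStrat (G : SimpleGraph V) (w : V → ℝ) [Nonempty V] : List V → V :=
  fun h =>
    if hx : ∃ v, LegalMove G h v ∧ good G w h v then hx.choose
    else if hy : ∃ v, LegalMove G h v then hy.choose else Classical.arbitrary V

lemma firstStrat_legal (G : SimpleGraph V) (w : V → ℝ) [Nonempty V] :
    LegalStrategy G (firstStrat G w) := by
  intro h hy
  rw [firstStrat]
  by_cases hx : ∃ v, LegalMove G h v ∧ good G w h v
  · rw [dif_pos hx]; exact hx.choose_spec.1
  · rw [dif_neg hx, dif_pos hy]; exact hy.choose_spec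

lemma firstStrat_spec (G : SimpleGraph V) (w : V → ℝ) [Nonempty V] {h : List V}
    (hx : ∃ v, LegalMove G h v ∧ good G w h v) :
    LegalMove G h (firstStrat G w h) ∧ good G w h (firstStrat G w h) := by
  rw [firstStrat, dif_pos hx]
  exact hx.choose_spec

theorem winM_start {G : SimpleGraph V} {w : V → ℝ} (hG : G.Connected)
    (hpos : ∀ v, 0 < w v)
    (hdist : ∀ A B : Finset V, A ≠ B → ∑ a ∈ A, w a ≠ ∑ b ∈ B, w b)
    (htree : G.IsTree) : winM G w (Fintype.card V) ∅ 0 := by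
  have hone : Nonempty V := hG.nonempty
  have hcpos : 0 < Fintype.card V := Fintype.card_pos
  obtain ⟨k, hk⟩ : ∃ k, Fintype.card V = k + 1 := ⟨_, (Nat.succ_pred_eq_of_pos hcpos).symm⟩
  rw [hk]
  by_contra hcon
  simp only [winM] at hcon
  push_neg at hcon
  have hall : ∀ v : V, winM G w k (insert v ∅) (w v) := by
    intro v
    have hleg : FLegal G ∅ v := ⟨Finset.notMem_empty v, Or.inl rfl⟩
    have h2 := (hcon v hleg).1 (hpos v)
    rwa [sub_zero] at h2
  cases k with
  | zero =>
    obtain ⟨v⟩ := hone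
    simpa [winM] using hall v
  | succ m =>
    have hstep : ∀ v : V, ∃ x, G.Adj v x ∧
        ((w v < w x ∧ ¬ winM G w m (insert x (insert v ∅)) (w x - w v)) ∨
         (w x < w v ∧ winM G w m (insert x (insert v ∅)) (w v - w x))) := by
      intro v
      have hv := hall v
      simp only [winM] at hv
      obtain ⟨x, hleg, hd⟩ := hv
      refine ⟨x, ?_, hd⟩
      rcases hleg.2 with h0 | ⟨u, hu, hadj⟩
      · simp at h0
      · simp only [Finset.mem_insert, Finset.notMem_empty, or_false] at hu
        rwa [hu] at hadj
    choose f hadj hf using hstep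
    haveI : DecidableRel G.Adj := fun a b => Classical.propDecidable _
    have hmaps : ∀ v ∈ Finset.univ, s(v, f v) ∈ G.edgeFinset := fun v _ =>
      SimpleGraph.mem_edgeFinset.mpr (hadj v)
    have hE := htree.card_edgeFinset
    have hcard : G.edgeFinset.card < (Finset.univ : Finset V).card := by
      rw [Finset.card_univ]
      omega
    obtain ⟨u, -, v, -, huv, hedge⟩ :=
      Finset.exists_ne_map_eq_of_card_lt_of_maps_to hcard hmaps
    rcases Sym2.eq_iff.mp hedge with ⟨h1, -⟩ | ⟨h1, h2⟩
    · exact huv h1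
    -- h1 : u = f v, h2 : f u = v
    have hwne : w u ≠ w v := by
      intro he
      exact hdist {u} {v} (by simpa using huv) (by simpa using he)
    have hpair : (insert (u:V) (insert v ∅) : Finset V) = insert v (insert u ∅) :=
      Finset.insert_comm u v ∅
    rcases hwne.lt_or_gt with hlt | hlt
    · -- w u < w v
      have hv' := hf v; rw [← h1] at hv'
      have hu' := hf u; rw [h2] at hu'
      rcases hv' with ⟨hgt, -⟩ | ⟨-, hwin⟩
      · exact absurd hgt (by linarith)
      rcases hu' with ⟨-, hnwin⟩ | ⟨hgt, -⟩
      · rw [← hpair] at hnwin; exact hnwin hwin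
      · exact absurd hgt (by linarith)
    · -- w v < w u
      have hv' := hf v; rw [← h1] at hv'
      have hu' := hf u; rw [h2] at hu'
      rcases hv' with ⟨-, hnwin⟩ | ⟨hgt, -⟩
      · rcases hu' with ⟨hgt, -⟩ | ⟨-, hwin⟩
        · exact absurd hgt (by linarith)
        · rw [hpair] at hnwin; exact hnwin hwin
      · exact absurd hgt (by linarith)

end ConcurrentSharing

namespace ConcurrentSharing

open Finset

set_option linter.unusedSectionVars false
set_option maxHeartbeats 1000000

variable {V : Type} [Fintype V] [DecidableEq V]

theorem firstStrat_guarantee {G : SimpleGraph V} {w : V → ℝ} [Nonempty V]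
    (hG : G.Connected) (hpos : ∀ v, 0 < w v) (hsum : ∑ v : V, w v = 1)
    (hdist : ∀ A B : Finset V, A ≠ B → ∑ a ∈ A, w a ≠ ∑ b ∈ B, w b)
    (htree : G.IsTree) {τ : List V → V} (hτ : LegalStrategy G τ) :
    1/2 ≤ firstScore w (firstStrat G w) τ := by
  set σ := firstStrat G w with hσdef
  have hσ : LegalStrategy G σ := firstStrat_legal G w
  have main : ∀ n, n ≤ Fintype.card V →
      (((scores w (playAux w σ τ n)).1 ≤ (scores w (playAux w σ τ n)).2 →
        winM G w (Fintype.card V - n) (playAux w σ τ n).toFinset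
          ((scores w (playAux w σ τ n)).2 - (scores w (playAux w σ τ n)).1)) ∧
      ((scores w (playAux w σ τ n)).2 < (scores w (playAux w σ τ n)).1 →
        ¬ winM G w (Fintype.card V - n) (playAux w σ τ n).toFinset
          ((scores w (playAux w σ τ n)).1 - (scores w (playAux w σ τ n)).2))) := by
    intro n
    induction n with
    | zero =>
      have h0 : playAux w σ τ 0 = ([] : List V) := rfl
      have hs : scores w ([] : List V) = (0, 0) := rfl
      intro _
      rw [h0, hs]
      constructor
      · intro _
        simpa using winM_start hG hpos hdist htree
      · intro hlt
        exact absurd hlt (lt_irrefl 0)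
    | succ n ih =>
      intro hn1
      have hn := Nat.le_of_succ_le hn1
      obtain ⟨hI1, hI2⟩ := ih hn
      obtain ⟨hlen, hnd⟩ := play_spec hG hσ hτ n hn
      have hfuel : Fintype.card V - n = (Fintype.card V - (n+1)) + 1 := by omega
      have hne : (playAux w σ τ n).toFinset ≠ Finset.univ := by
        intro heq
        have hcard := List.toFinset_card_of_nodup hnd
        rw [heq, Finset.card_univ, hlen] at hcard
        omega
      have hex : ∃ v, LegalMove G (playAux w σ τ n) v := exists_legalMove_s8 hG hne
      by_cases hc : (scores w (playAux w σ τ n)).1 ≤ (scores w (playAux w σ τ n)).2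
      · -- first player's move
        have hwin := hI1 hc
        rw [hfuel] at hwin
        simp only [winM] at hwin
        obtain ⟨v0, hleg0, hd0⟩ := hwin
        have hgx : ∃ v, LegalMove G (playAux w σ τ n) v ∧ good G w (playAux w σ τ n) v := by
          refine ⟨v0, (fLegal_iff G _ v0).mp hleg0, ?_⟩
          simp only [good, hlen]
          exact hd0
        obtain ⟨hlegσ, hgood⟩ := firstStrat_spec G w hgx
        have hunf : playAux w σ τ (n+1) = σ (playAux w σ τ n) :: playAux w σ τ n := by
          simp [playAux, hc]
        have hsc : scores w (playAux w σ τ (n+1)) =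
            ((scores w (playAux w σ τ n)).1 + w (σ (playAux w σ τ n)),
             (scores w (playAux w σ τ n)).2) := by
          rw [hunf]; simp [scores, hc]
        have hs1 : (scores w (playAux w σ τ (n+1))).1
            = (scores w (playAux w σ τ n)).1 + w (σ (playAux w σ τ n)) := by rw [hsc]
        have hs2 : (scores w (playAux w σ τ (n+1))).2
            = (scores w (playAux w σ τ n)).2 := by rw [hsc]
        have htf : (playAux w σ τ (n+1)).toFinset
            = insert (σ (playAux w σ τ n)) (playAux w σ τ n).toFinset := by
          rw [hunf, List.toFinset_cons]
        simp only [good, hlen] at hgood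
        rcases hgood with ⟨hlt, hnw⟩ | ⟨hlt, hw⟩
        · constructor
          · intro hle
            rw [hs1, hs2] at hle
            exact absurd hle (by linarith)
          · intro _
            rw [hs1, hs2, htf]
            have heq : (scores w (playAux w σ τ n)).1 + w (σ (playAux w σ τ n)) -
                (scores w (playAux w σ τ n)).2
                = w (σ (playAux w σ τ n)) -
                  ((scores w (playAux w σ τ n)).2 - (scores w (playAux w σ τ n)).1) := by ring
            rw [heq]
            exact hnw
        · constructor
          · intro _
            rw [hs1, hs2, htf]
            have heq : (scores w (playAux w σ τ n)).2 -
                ((scores w (playAux w σ τ n)).1 + w (σ (playAux w σ τ n)))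
                = ((scores w (playAux w σ τ n)).2 - (scores w (playAux w σ τ n)).1)
                  - w (σ (playAux w σ τ n)) := by ring
            rw [heq]
            exact hw
          · intro hlt2
            rw [hs1, hs2] at hlt2
            exact absurd hlt2 (not_lt.mpr (by linarith))
      · -- second player's move
        have hlt1 : (scores w (playAux w σ τ n)).2 < (scores w (playAux w σ τ n)).1 :=
          not_le.mp hc
        have hnwin := hI2 hlt1
        rw [hfuel] at hnwin
        simp only [winM] at hnwin
        have hlegτ : LegalMove G (playAux w σ τ n) (τ (playAux w σ τ n)) := hτ _ hex
        have hspec : ¬ ((((scores w (playAux w σ τ n)).1 - (scores w (playAux w σ τ n)).2)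
              < w (τ (playAux w σ τ n)) ∧
            ¬ winM G w (Fintype.card V - (n+1))
              (insert (τ (playAux w σ τ n)) (playAux w σ τ n).toFinset)
              (w (τ (playAux w σ τ n)) -
                ((scores w (playAux w σ τ n)).1 - (scores w (playAux w σ τ n)).2))) ∨
            (w (τ (playAux w σ τ n)) <
              ((scores w (playAux w σ τ n)).1 - (scores w (playAux w σ τ n)).2) ∧
            winM G w (Fintype.card V - (n+1))
              (insert (τ (playAux w σ τ n)) (playAux w σ τ n).toFinset)
              (((scores w (playAux w σ τ n)).1 - (scores w (playAux w σ τ n)).2) -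
                w (τ (playAux w σ τ n))))) :=
          fun hd => hnwin ⟨τ (playAux w σ τ n), (fLegal_iff G _ _).mpr hlegτ, hd⟩
        have hunf : playAux w σ τ (n+1) = τ (playAux w σ τ n) :: playAux w σ τ n := by
          simp [playAux, hc]
        have hsc : scores w (playAux w σ τ (n+1)) =
            ((scores w (playAux w σ τ n)).1,
             (scores w (playAux w σ τ n)).2 + w (τ (playAux w σ τ n))) := by
          rw [hunf]; simp [scores, hc]
        have hs1 : (scores w (playAux w σ τ (n+1))).1
            = (scores w (playAux w σ τ n)).1 := by rw [hsc]
        have hs2 : (scores w (playAux w σ τ (n+1))).2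
            = (scores w (playAux w σ τ n)).2 + w (τ (playAux w σ τ n)) := by rw [hsc]
        have htf : (playAux w σ τ (n+1)).toFinset
            = insert (τ (playAux w σ τ n)) (playAux w σ τ n).toFinset := by
          rw [hunf, List.toFinset_cons]
        rcases lt_trichotomy (w (τ (playAux w σ τ n)))
            ((scores w (playAux w σ τ n)).1 - (scores w (playAux w σ τ n)).2) with h3 | h3 | h3
        · -- still behind
          have hnw : ¬ winM G w (Fintype.card V - (n+1))
              (insert (τ (playAux w σ τ n)) (playAux w σ τ n).toFinset)
              (((scores w (playAux w σ τ n)).1 - (scores w (playAux w σ τ n)).2) -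
                w (τ (playAux w σ τ n))) := fun hwn => hspec (Or.inr ⟨h3, hwn⟩)
          constructor
          · intro hle
            rw [hs1, hs2] at hle
            exact absurd hle (not_le.mpr (by linarith))
          · intro _
            rw [hs1, hs2, htf]
            have heq : (scores w (playAux w σ τ n)).1 -
                ((scores w (playAux w σ τ n)).2 + w (τ (playAux w σ τ n)))
                = ((scores w (playAux w σ τ n)).1 - (scores w (playAux w σ τ n)).2) -
                  w (τ (playAux w σ τ n)) := by ring
            rw [heq]
            exact hnw
        · -- tie: impossible by distinct subset sums
          exfalso
          obtain ⟨F, S, hdis, hun, hF, hS⟩ := scores_eq_sum w _ hnd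
          have hvS : τ (playAux w σ τ n) ∉ S := fun hm =>
            hlegτ.1 (List.mem_toFinset.mp (hun ▸ Finset.mem_union_right F hm))
          have hvF : τ (playAux w σ τ n) ∉ F := fun hm =>
            hlegτ.1 (List.mem_toFinset.mp (hun ▸ Finset.mem_union_left S hm))
          have hneq : F ≠ insert (τ (playAux w σ τ n)) S := fun heq =>
            hvF (heq ▸ Finset.mem_insert_self _ S)
          exact hdist F (insert (τ (playAux w σ τ n)) S) hneq
            (by rw [Finset.sum_insert hvS, ← hF, ← hS]; linarith)
        · -- overtakes
          have hw : winM G w (Fintype.card V - (n+1))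
              (insert (τ (playAux w σ τ n)) (playAux w σ τ n).toFinset)
              (w (τ (playAux w σ τ n)) -
                ((scores w (playAux w σ τ n)).1 - (scores w (playAux w σ τ n)).2)) := by
            by_contra hq
            exact hspec (Or.inl ⟨h3, hq⟩)
          constructor
          · intro _
            rw [hs1, hs2, htf]
            have heq : (scores w (playAux w σ τ n)).2 + w (τ (playAux w σ τ n)) -
                (scores w (playAux w σ τ n)).1
                = w (τ (playAux w σ τ n)) -
                  ((scores w (playAux w σ τ n)).1 - (scores w (playAux w σ τ n)).2) := by ring
            rw [heq]
            exact hw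
          · intro hlt2
            rw [hs1, hs2] at hlt2
            exact absurd hlt2 (not_lt.mpr (by linarith))
  -- endgame
  have hfin := main (Fintype.card V) le_rfl
  obtain ⟨hlen, hnd⟩ := play_spec hG hσ hτ (Fintype.card V) le_rfl
  have hlt : (scores w (playAux w σ τ (Fintype.card V))).2 <
      (scores w (playAux w σ τ (Fintype.card V))).1 := by
    by_contra hle
    have hfalse := hfin.1 (not_lt.mp hle)
    rw [Nat.sub_self] at hfalse
    simp only [winM] at hfalse
  obtain ⟨F, S, hdis, hun, h1, h2⟩ := scores_eq_sum w _ hnd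
  have huniv : (playAux w σ τ (Fintype.card V)).toFinset = Finset.univ :=
    Finset.eq_univ_of_card _ (by rw [List.toFinset_card_of_nodup hnd, hlen])
  have hsum1 : (scores w (playAux w σ τ (Fintype.card V))).1 +
      (scores w (playAux w σ τ (Fintype.card V))).2 = 1 := by
    rw [h1, h2, ← Finset.sum_union hdis, hun, huniv]
    exact hsum
  rw [firstScore]
  linarith

end ConcurrentSharing

namespace ConcurrentSharing

open Finset

set_option linter.unusedSectionVars false

variable {V : Type} [Fintype V] [DecidableEq V]

theorem firstGuarantees_half {G : SimpleGraph V} {w : V → ℝ}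
    (hinst : IsGameInstance G w) (htree : G.IsTree) : FirstGuarantees G w (1/2) := by
  obtain ⟨hG, hw, hsum, hdist⟩ := hinst
  haveI : Nonempty V := hG.nonempty
  exact ⟨firstStrat G w, firstStrat_legal G w,
    fun τ hτ => firstStrat_guarantee hG (fun v => (hw v).1) hsum hdist htree hτ⟩

lemma firstScore_bounds {G : SimpleGraph V} {w : V → ℝ} (hG : G.Connected)
    (hpos : ∀ v, 0 < w v) (hsum : ∑ v : V, w v = 1) {σ τ : List V → V}
    (hσ : LegalStrategy G σ) (hτ : LegalStrategy G τ) :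
    0 ≤ firstScore w σ τ ∧ firstScore w σ τ ≤ 1 := by
  obtain ⟨hlen, hnd⟩ := play_spec hG hσ hτ (Fintype.card V) le_rfl
  obtain ⟨F, S, hdis, hun, h1, h2⟩ := scores_eq_sum w _ hnd
  rw [firstScore, h1]
  constructor
  · exact Finset.sum_nonneg fun i _ => (hpos i).le
  · calc ∑ x ∈ F, w x ≤ ∑ x ∈ Finset.univ, w x :=
        Finset.sum_le_sum_of_subset_of_nonneg (Finset.subset_univ F) fun i _ _ => (hpos i).le
    _ = 1 := hsum

lemma gameValue_ge_half {G : SimpleGraph V} {w : V → ℝ}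
    (hinst : IsGameInstance G w) (htree : G.IsTree) : 1/2 ≤ gameValue G w := by
  haveI : Nonempty V := hinst.1.nonempty
  apply le_csSup
  · refine ⟨1, fun c hc => ?_⟩
    obtain ⟨σ, hσ, hcs⟩ := hc
    exact (hcs (anyStrat G) (anyStrat_legal G)).trans
      (firstScore_bounds hinst.1 (fun v => (hinst.2.1 v).1) hinst.2.2.1 hσ
        (anyStrat_legal G)).2
  · exact firstGuarantees_half hinst htree

/-! ### The two-vertex instances -/

lemma top_fin2_isTree : (⊤ : SimpleGraph (Fin 2)).IsTree := by
  constructor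
  · exact SimpleGraph.connected_top
  · intro v c hcyc
    have h3 := hcyc.three_le_length
    have hnd := hcyc.support_nodup
    have hle := hnd.length_le_card
    rw [List.length_tail, SimpleGraph.Walk.length_support] at hle
    simp only [Fintype.card_fin] at hle
    omega

lemma firstScore_two {w : Fin 2 → ℝ} (hpos : ∀ v, 0 < w v) (σ τ : List (Fin 2) → Fin 2) :
    firstScore w σ τ = w (σ []) := by
  have hcard : Fintype.card (Fin 2) = 2 := by simp
  have h0 : playAux w σ τ 0 = [] := rfl
  have hs0 : scores w ([] : List (Fin 2)) = (0, 0) := rfl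
  have h1 : playAux w σ τ 1 = [σ []] := by
    simp [playAux, h0, hs0]
  have hs1 : scores w [σ []] = (w (σ []), 0) := by
    simp [scores, hs0]
  have h2 : playAux w σ τ 2 = [τ [σ []], σ []] := by
    have hstep : playAux w σ τ 2 =
        (if (scores w (playAux w σ τ 1)).1 ≤ (scores w (playAux w σ τ 1)).2
          then σ (playAux w σ τ 1) else τ (playAux w σ τ 1)) :: playAux w σ τ 1 := rfl
    rw [hstep, h1, hs1, if_neg (hpos (σ [])).not_ge]
  rw [firstScore, hcard, h2]
  simp [scores, hs1, (hpos (σ [])).not_ge]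

noncomputable def w2 (ε : ℝ) : Fin 2 → ℝ := ![1/2 + ε, 1/2 - ε]

lemma w2_pos {ε : ℝ} (h1 : 0 < ε) (h2 : ε < 1/2) : ∀ v, 0 < w2 ε v := by
  intro v
  fin_cases v <;> simp [w2] <;> linarith

lemma w2_le {ε : ℝ} (h1 : 0 < ε) (h2 : ε < 1/2) : ∀ v, w2 ε v ≤ 1/2 + ε := by
  intro v
  fin_cases v <;> simp [w2] <;> linarith

lemma w2_sum (ε : ℝ) : ∑ v, w2 ε v = 1 := by
  rw [Fin.sum_univ_two]
  simp [w2]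
  ring

lemma fin2_finsets (A : Finset (Fin 2)) : A = ∅ ∨ A = {0} ∨ A = {1} ∨ A = {0, 1} := by
  revert A
  decide

lemma w2_dist {ε : ℝ} (h1 : 0 < ε) (h2 : ε < 1/2) :
    ∀ A B : Finset (Fin 2), A ≠ B → ∑ a ∈ A, w2 ε a ≠ ∑ b ∈ B, w2 ε b := by
  have hpair : ({0, 1} : Finset (Fin 2)) = Finset.univ := by decide
  intro A B hne
  rcases fin2_finsets A with rfl | rfl | rfl | rfl <;>
    rcases fin2_finsets B with rfl | rfl | rfl | rfl <;>
      first
        | exact absurd rfl hne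
        | (simp [hpair, w2_sum, w2, Fin.sum_univ_two]; try linarith)

lemma w2_inst {ε : ℝ} (h1 : 0 < ε) (h2 : ε < 1/2) :
    IsGameInstance (⊤ : SimpleGraph (Fin 2)) (w2 ε) := by
  refine ⟨SimpleGraph.connected_top, fun v => ⟨w2_pos h1 h2 v, ?_⟩, w2_sum ε, w2_dist h1 h2⟩
  exact (w2_le h1 h2 v).trans (by linarith)

lemma two_gameValue_le {ε : ℝ} (h1 : 0 < ε) (h2 : ε < 1/2) :
    gameValue (⊤ : SimpleGraph (Fin 2)) (w2 ε) ≤ 1/2 + ε := by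
  haveI : Nonempty (Fin 2) := ⟨0⟩
  apply csSup_le
  · refine ⟨0, anyStrat ⊤, anyStrat_legal ⊤, fun τ hτ => ?_⟩
    exact (firstScore_bounds SimpleGraph.connected_top (w2_pos h1 h2) (w2_sum ε)
      (anyStrat_legal ⊤) hτ).1
  · intro c hc
    obtain ⟨σ, hσ, hcs⟩ := hc
    refine (hcs (anyStrat ⊤) (anyStrat_legal ⊤)).trans ?_
    rw [firstScore_two (w2_pos h1 h2) σ (anyStrat ⊤)]
    exact w2_le h1 h2 (σ [])

end ConcurrentSharing



open ConcurrentSharing in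
/-- The infimum of `v(G,w)` over all instances `(G,w)` of the
concurrent graph sharing game in which `G` is a tree equals `1/2`. -/
theorem inf_tree_gameValue_eq_one_half :
    sInf {r : ℝ | ∃ (n : ℕ) (G : SimpleGraph (Fin n)) (w : Fin n → ℝ),
        IsGameInstance G w ∧ G.IsTree ∧ r = gameValue G w} = 1 / 2 := by
  set T : Set ℝ := {r : ℝ | ∃ (n : ℕ) (G : SimpleGraph (Fin n)) (w : Fin n → ℝ),
        IsGameInstance G w ∧ G.IsTree ∧ r = gameValue G w} with hT
  have hlow : ∀ r ∈ T, 1 / 2 ≤ r := by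
    rintro r ⟨n, G, w, hinst, htree, rfl⟩
    exact gameValue_ge_half hinst htree
  have hmem : ∀ ε : ℝ, 0 < ε → ε < 1/2 → ∃ r ∈ T, r ≤ 1/2 + ε := by
    intro ε h1 h2
    exact ⟨gameValue (⊤ : SimpleGraph (Fin 2)) (w2 ε),
      ⟨2, ⊤, w2 ε, w2_inst h1 h2, top_fin2_isTree, rfl⟩, two_gameValue_le h1 h2⟩
  have hne : T.Nonempty := by
    obtain ⟨r, hr, -⟩ := hmem (1/4) (by norm_num) (by norm_num)
    exact ⟨r, hr⟩
  refine le_antisymm ?_ (le_csInf hne hlow)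
  apply le_of_forall_pos_le_add
  intro ε hε
  obtain ⟨r, hr, hrle⟩ := hmem (min ε (1/4)) (lt_min hε (by norm_num))
    ((min_le_right _ _).trans_lt (by norm_num))
  calc sInf T ≤ r := csInf_le ⟨1/2, hlow⟩ hr
  _ ≤ 1/2 + min ε (1/4) := hrle
  _ ≤ 1/2 + ε := by
      have := min_le_left ε (1/4)
      linarith
end
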